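/- Let G be a finite connected simple graph with at least 5 vertices and let c be any proper coloring of G. Then every up-color dominating c-set D of G satisfies Σ_{v∈D} c(v) ≥ max{χ(G) − 1, γ(G)}. -/
import Mathlib


/-- `D` is an up-color dominating `c`-set of `G`. -/
def IsUCDomSet {V : Type*} (G : SimpleGraph V) (c : V → ℕ) (D : Finset V) : Prop :=
  (∀ v ∉ D, ∃ d ∈ D, G.Adj v d ∧ c v < c d) ∧ ∀ d ∈ D, 1 ≤ c d

/-- `D` is a dominating set of `G`. -/
def IsDomSet {V : Type*} (G : SimpleGraph V) (D : Finset V) : Prop :=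
  ∀ v ∉ D, ∃ d ∈ D, G.Adj v d

/-- The domination number of `G`. -/
noncomputable def domNum (V : Type*) [Fintype V] (G : SimpleGraph V) : ℕ :=
  sInf {n | ∃ D : Finset V, IsDomSet G D ∧ D.card = n}

/-- The chromatic number of `G` (as a natural number). -/
noncomputable def chromNum {V : Type*} (G : SimpleGraph V) : ℕ :=
  sInf {n | G.Colorable n}

theorem stmt_15 {V : Type*} [Fintype V] (G : SimpleGraph V)
    (hconn : G.Connected) (hcard : 5 ≤ Fintype.card V)
    (c : V → ℕ) (hc : ∀ ⦃u v⦄, G.Adj u v → c u ≠ c v)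
    (D : Finset V) (hD : IsUCDomSet G c D) :
    max (chromNum G - 1) (domNum V G) ≤ ∑ v ∈ D, c v := by
  have hne : Nonempty V := Fintype.card_pos_iff.mp (by omega)
  obtain ⟨hdom, hone⟩ := hD
  apply max_le
  · obtain ⟨v, -, hv⟩ := Finset.exists_max_image Finset.univ c
      ⟨Classical.arbitrary V, Finset.mem_univ _⟩
    have hvD : v ∈ D := by
      by_contra h
      obtain ⟨d, hd, -, hlt⟩ := hdom v h
      exact absurd (hv d (Finset.mem_univ d)) (not_le.mpr hlt)
    have hsum : c v ≤ ∑ u ∈ D, c u :=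
      Finset.single_le_sum (fun i _ => Nat.zero_le _) hvD
    have hcol : G.Colorable (c v + 1) :=
      ⟨SimpleGraph.Coloring.mk
        (fun u => ⟨c u, Nat.lt_succ_of_le (hv u (Finset.mem_univ u))⟩)
        (fun {a b} hab => by simpa [Fin.ext_iff] using hc hab)⟩
    have hch : chromNum G ≤ c v + 1 := Nat.sInf_le hcol
    omega
  · have h1 : domNum V G ≤ D.card :=
      Nat.sInf_le ⟨D, fun u hu => (hdom u hu).imp (fun d hd => ⟨hd.1, hd.2.1⟩), rfl⟩
    have h2 : D.card ≤ ∑ u ∈ D, c u := by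
      calc D.card = ∑ _u ∈ D, 1 := by simp
        _ ≤ ∑ u ∈ D, c u := Finset.sum_le_sum hone
    omega
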